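/- Let a : ℕ × ℕ → ℚ(q) be any doubly indexed sequence satisfying the q-Akiyama–Tanigawa recurrence a_{n+1, m} = [m+1]_q · ( a_{n, m} − a_{n, m+1} ) for all n, m ≥ 0. Then for every n ≥ 0, a_{n, 0} = ∑_{m=0}^{n} (−1)^m · [m]!_q · {n+1 brace m+1}_q · a_{0, m}. -/
import Mathlib


open Finset

/-- The q-integer `[n]_q = 1 + q + ⋯ + q^(n-1)`. -/
def qInt {R : Type*} [CommSemiring R] (q : R) (n : ℕ) : R :=
  ∑ i ∈ Finset.range n, q ^ i

/-- The q-factorial `[n]!_q = [1]_q [2]_q ⋯ [n]_q`. -/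
def qFact {R : Type*} [CommSemiring R] (q : R) (n : ℕ) : R :=
  ∏ i ∈ Finset.range n, qInt q (i + 1)

/-- The Carlitz q-Stirling numbers of the second kind. -/
def qStirling {R : Type*} [CommSemiring R] (q : R) : ℕ → ℕ → R
  | 0, 0 => 1
  | 0, _ + 1 => 0
  | _ + 1, 0 => 0
  | n + 1, m + 1 => qStirling q n m + qInt q (m + 1) * qStirling q n (m + 1)

section Aux
variable {R : Type*} [CommRing R] (q : R)

lemma qInt_add (a b : ℕ) : qInt q (a + b) = qInt q a + q ^ a * qInt q b := by
  induction b with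
  | zero => simp [qInt]
  | succ b ih =>
    have : a + (b+1) = (a+b) + 1 := by ring
    rw [this]
    simp only [qInt, Finset.sum_range_succ] at *
    rw [ih]; ring

/-- shifted Carlitz stirling -/
def D (j : ℕ) : ℕ → ℕ → R
  | 0, 0 => 1
  | 0, _ + 1 => 0
  | _ + 1, 0 => 0
  | n + 1, m + 1 => D j n m + qInt q (j + m + 1) * D j n (m + 1)

lemma D_eq_zero (j : ℕ) : ∀ n m, n < m → D q j n m = 0 := by
  intro n
  induction n with
  | zero => intro m h; match m, h with | m+1, _ => rfl
  | succ n ih =>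
    intro m h
    match m, h with
    | m+1, h =>
      show D q j n m + qInt q (j + m + 1) * D q j n (m+1) = 0
      rw [ih m (by omega), ih (m+1) (by omega)]; ring

lemma D_shift (j : ℕ) : ∀ n m, D q (j+1) n m = D q j n m + q^(j+1) * qInt q m * D q j n (m+1) := by
  intro n
  induction n with
  | zero =>
    intro m
    match m with
    | 0 => show (1:R) = 1 + q^(j+1) * qInt q 0 * 0; simp [qInt]
    | m+1 => show (0:R) = 0 + q^(j+1) * qInt q (m+1) * 0; ring
  | succ n ih =>
    intro m
    match m with
    | 0 => show (0:R) = 0 + q^(j+1) * qInt q 0 * (D q j n 0 + _); simp [qInt]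
    | m+1 =>
      show D q (j+1) n m + qInt q ((j+1) + m + 1) * D q (j+1) n (m+1)
        = (D q j n m + qInt q (j+m+1) * D q j n (m+1))
          + q^(j+1) * qInt q (m+1) * (D q j n (m+1) + qInt q (j+(m+1)+1) * D q j n (m+2))
      rw [ih m, ih (m+1)]
      have h1 : qInt q (j+1+m+1) = qInt q (j+m+1) + q^(j+m+1) := by
        have := qInt_add q (j+m+1) 1
        simp [qInt] at this ⊢
        rw [show j+1+m+1 = j+m+1+1 by ring, show j+m+(1+1) = j+m+1+1 by ring] at *
        rw [this]
      have h2 : qInt q (m+1) = qInt q m + q^m := by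
        have := qInt_add q m 1
        simp [qInt] at this ⊢
        rw [this]
      have h3 : qInt q (j+(m+1)+1) = qInt q (j+m+1) + q^(j+m+1) := by
        rw [show j+(m+1)+1 = j+1+m+1 by ring]; exact h1
      rw [h1, h3, h2]
      ring

def P (j m : ℕ) : R := ∏ i ∈ Finset.range m, qInt q (j + i + 1)

def C (j n m : ℕ) : R := (-1)^m * P q j m * D q j (n+1) (m+1)

lemma P_succ (j m : ℕ) : P q j (m+1) = P q j m * qInt q (j+m+1) := Finset.prod_range_succ _ _

lemma P_shift (j m : ℕ) : P q j (m+1) = qInt q (j+1) * P q (j+1) m := by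
  unfold P
  rw [Finset.prod_range_succ']
  rw [mul_comm]
  congr 1
  apply Finset.prod_congr rfl
  intro i _
  congr 1
  omega

lemma C_zero (j n : ℕ) : C q j (n+1) 0 = qInt q (j+1) * C q j n 0 := by
  unfold C P
  show (-1)^0 * 1 * (D q j (n+1) 0 + qInt q (j+0+1) * D q j (n+1) 1) = _
  rw [show D q j (n+1) 0 = 0 from rfl]
  simp

lemma C_succ (j n m : ℕ) :
    C q j (n+1) (m+1) = qInt q (j+1) * (C q j n (m+1) - C q (j+1) n m) := by
  unfold C
  show (-1)^(m+1) * P q j (m+1) * (D q j (n+1) (m+1) + qInt q (j+(m+1)+1) * D q j (n+1) (m+2)) = _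
  rw [D_shift q j (n+1) (m+1)]
  have h1 : qInt q (j+(m+1)+1) = qInt q (j+1) + q^(j+1) * qInt q (m+1) := by
    rw [show j+(m+1)+1 = (j+1) + (m+1) by ring, qInt_add]
  rw [h1, P_shift]
  ring

lemma C_top (j n : ℕ) : C q j n (n+1) = 0 := by
  unfold C
  rw [D_eq_zero q j (n+1) (n+2) (by omega)]
  ring

end Aux

section Aux2
variable {R : Type*} [CommRing R] (q : R)

lemma P_zero_eq (m : ℕ) : P q 0 m = qFact q m := by
  unfold P qFact
  apply Finset.prod_congr rfl
  intro i _
  norm_num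

lemma D_zero_eq : ∀ n m, D q 0 n m = qStirling q n m := by
  intro n
  induction n with
  | zero => intro m; match m with | 0 => rfl | m+1 => rfl
  | succ n ih =>
    intro m
    match m with
    | 0 => rfl
    | m+1 =>
      show D q 0 n m + qInt q (0+m+1) * D q 0 n (m+1)
        = qStirling q n m + qInt q (m+1) * qStirling q n (m+1)
      rw [ih, ih]; norm_num

lemma main_lemma (a : ℕ → ℕ → R)
    (hrec : ∀ n m, a (n+1) m = qInt q (m+1) * (a n m - a n (m+1))) :
    ∀ n j, a n j = ∑ m ∈ Finset.range (n+1), C q j n m * a 0 (j+m) := by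
  intro n
  induction n with
  | zero =>
    intro j
    have hC : C q j 0 0 = 1 := by
      show (-1:R)^0 * P q j 0 * (D q j 0 0 + qInt q (j+0+1) * D q j 0 1) = 1
      show (-1:R)^0 * P q j 0 * (1 + qInt q (j+0+1) * 0) = 1
      simp [P]
    simp [hC]
  | succ n ih =>
    intro j
    rw [hrec, ih j, ih (j+1)]
    have e1 : ∑ m ∈ Finset.range (n+1), C q j n m * a 0 (j+m)
        = ∑ m ∈ Finset.range (n+1), C q j n (m+1) * a 0 (j+(m+1)) + C q j n 0 * a 0 (j+0) := by
      have h := Finset.sum_range_succ' (fun m => C q j n m * a 0 (j+m)) (n+1)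
      rw [Finset.sum_range_succ, C_top, zero_mul, add_zero] at h
      rw [← h]
    have e2 : ∑ m ∈ Finset.range (n+1+1), C q j (n+1) m * a 0 (j+m)
        = ∑ m ∈ Finset.range (n+1), C q j (n+1) (m+1) * a 0 (j+(m+1)) + C q j (n+1) 0 * a 0 (j+0) := by
      rw [Finset.sum_range_succ' (fun m => C q j (n+1) m * a 0 (j+m)) (n+1)]
    rw [e1, e2, C_zero]
    have e3 : ∀ m, a 0 (j+1+m) = a 0 (j+(m+1)) := fun m => by
      rw [show j+1+m = j+(m+1) by omega]
    simp only [e3]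
    rw [add_sub_right_comm, mul_add, ← Finset.sum_sub_distrib, Finset.mul_sum]
    congr 1
    · apply Finset.sum_congr rfl
      intro m _
      rw [C_succ]
      ring
    · ring

end Aux2

/-- Variant A of the q-Akiyama–Tanigawa algorithm (Zeng): if
`a_{n+1,m} = [m+1]_q (a_{n,m} - a_{n,m+1})` for all `n, m ≥ 0`, then
`a_{n,0} = ∑_{m=0}^n (-1)^m [m]!_q {n+1 brace m+1}_q a_{0,m}`. -/
theorem qAkiyamaTanigawa_A (a : ℕ → ℕ → RatFunc ℚ)
    (hrec : ∀ n m : ℕ,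
      a (n + 1) m = qInt (RatFunc.X : RatFunc ℚ) (m + 1) * (a n m - a n (m + 1))) :
    ∀ n : ℕ, a n 0
      = ∑ m ∈ Finset.range (n + 1),
          (-1 : RatFunc ℚ) ^ m * qFact (RatFunc.X : RatFunc ℚ) m *
            qStirling (RatFunc.X : RatFunc ℚ) (n + 1) (m + 1) * a 0 m := by
  intro n
  rw [main_lemma RatFunc.X a hrec n 0]
  apply Finset.sum_congr rfl
  intro m _
  unfold C
  rw [P_zero_eq, D_zero_eq]
  norm_num
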